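/- Let F = (E, A) be a matching forest on a finite vertex type V and let i ≠ j be vertices with h_F(i) = 0 and h_F(j) = 0. Then F' = (E ∪ {s(i, j)}, A), obtained by adding the undirected edge {i, j}, is again a matching forest, and h_{F'}(i) = h_{F'}(j) = 1. -/

import Mathlib

/-- A mixed graph on a vertex type `V`: a finite set `E` of undirected edges (with no
loops) and a finite set `A` of directed edges (with no self-loops). -/
structure MixedGraph (V : Type*) where
  E : Finset (Sym2 V)
  A : Finset (V × V)
  no_loops : ∀ e ∈ E, ¬ e.IsDiag
  no_diag : ∀ a ∈ A, a.1 ≠ a.2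

/-- `headCount F i` is the number of edges of `F` of which `i` is a head: `i` is a head
of an undirected edge iff it is one of its endpoints, and of a directed edge iff it is
its target. -/
def MixedGraph.headCount {V : Type*} [DecidableEq V] (F : MixedGraph V) (i : V) : ℕ :=
  (F.E.filter fun e => i ∈ e).card + (F.A.filter fun a => a.2 = i).card

/-- The underlying undirected graph of a mixed graph: `a ~ b` iff `a ≠ b` and the two
vertices are joined by an undirected edge or by a directed edge (in either direction). -/
def MixedGraph.UUG {V : Type*} (F : MixedGraph V) : SimpleGraph V :=
  SimpleGraph.fromRel fun a b => s(a, b) ∈ F.E ∨ (a, b) ∈ F.A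

/-- A matching forest: every vertex is the head of at most one edge, no two distinct
edges share the same underlying unordered vertex pair, and the underlying undirected
graph is acyclic. -/
def MixedGraph.IsMatchingForest {V : Type*} [DecidableEq V] (F : MixedGraph V) : Prop :=
  (∀ i : V, F.headCount i ≤ 1) ∧
  (∀ a b : V, ¬((a, b) ∈ F.A ∧ (b, a) ∈ F.A)) ∧
  (∀ a b : V, s(a, b) ∈ F.E → (a, b) ∉ F.A ∧ (b, a) ∉ F.A) ∧
  F.UUG.IsAcyclic

/-- `F` is a sub-mixed-graph of `G`. -/
def MixedGraph.IsSubgraph {V : Type*} (F G : MixedGraph V) : Prop :=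
  F.E ⊆ G.E ∧ F.A ⊆ G.A

/-- Add an undirected edge between two distinct vertices of a mixed graph. -/
def MixedGraph.addUndirEdge {V : Type*} [DecidableEq V] (F : MixedGraph V) {i j : V}
    (h : i ≠ j) : MixedGraph V where
  E := insert s(i, j) F.E
  A := F.A
  no_loops := by
    intro e he
    rcases Finset.mem_insert.mp he with rfl | he
    · simpa [Sym2.mk_isDiag_iff] using h
    · exact F.no_loops e he
  no_diag := F.no_diag

lemma headCount_zero_E {V : Type*} [DecidableEq V] {F : MixedGraph V} {v : V}
    (h : F.headCount v = 0) : ∀ e ∈ F.E, v ∉ e := by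
  unfold MixedGraph.headCount at h
  rw [Nat.add_eq_zero] at h
  have := Finset.card_eq_zero.mp h.1
  intro e he hv
  have : e ∈ F.E.filter fun e => v ∈ e := Finset.mem_filter.mpr ⟨he, hv⟩
  simp_all

lemma headCount_zero_A {V : Type*} [DecidableEq V] {F : MixedGraph V} {v : V}
    (h : F.headCount v = 0) : ∀ a ∈ F.A, a.2 ≠ v := by
  unfold MixedGraph.headCount at h
  rw [Nat.add_eq_zero] at h
  have := Finset.card_eq_zero.mp h.2
  intro a ha hv
  have : a ∈ F.A.filter fun a => a.2 = v := Finset.mem_filter.mpr ⟨ha, hv⟩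
  simp_all
  exact this _ _ ha hv

lemma UUG_adj {V : Type*} {F : MixedGraph V} {a b : V} :
    F.UUG.Adj a b ↔ a ≠ b ∧ (s(a, b) ∈ F.E ∨ (a, b) ∈ F.A ∨ (b, a) ∈ F.A) := by
  simp only [MixedGraph.UUG, SimpleGraph.fromRel_adj]
  constructor
  · rintro ⟨hne, (h | h) | (h | h)⟩
    · exact ⟨hne, Or.inl h⟩
    · exact ⟨hne, Or.inr (Or.inl h)⟩
    · exact ⟨hne, Or.inl (Sym2.eq_swap ▸ h)⟩
    · exact ⟨hne, Or.inr (Or.inr h)⟩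
  · rintro ⟨hne, h | h | h⟩
    · exact ⟨hne, Or.inl (Or.inl h)⟩
    · exact ⟨hne, Or.inl (Or.inr h)⟩
    · exact ⟨hne, Or.inr (Or.inr h)⟩

/-- Two distinct arcs heading into `v` contradict `headCount v ≤ 1`. -/
lemma two_arcs_absurd {V : Type*} [DecidableEq V] {F : MixedGraph V} {v c d : V}
    (hle : F.headCount v ≤ 1) (hc : (c, v) ∈ F.A) (hd : (d, v) ∈ F.A) (hcd : c ≠ d) : False := by
  have h2 : 1 < (F.A.filter fun a => a.2 = v).card := by
    apply Finset.one_lt_card.mpr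
    exact ⟨(c, v), Finset.mem_filter.mpr ⟨hc, rfl⟩, (d, v), Finset.mem_filter.mpr ⟨hd, rfl⟩,
      by simp [hcd]⟩
  have : 1 < F.headCount v := lt_of_lt_of_le h2 (Nat.le_add_left _ _)
  omega

/-- An undirected edge at `v` together with an arc into `v` contradicts `headCount v ≤ 1`. -/
lemma edge_arc_absurd {V : Type*} [DecidableEq V] {F : MixedGraph V} {v c : V} {e : Sym2 V}
    (hle : F.headCount v ≤ 1) (he : e ∈ F.E) (hve : v ∈ e) (hc : (c, v) ∈ F.A) : False := by
  have h1 : 0 < (F.E.filter fun e => v ∈ e).card :=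
    Finset.card_pos.mpr ⟨e, Finset.mem_filter.mpr ⟨he, hve⟩⟩
  have h2 : 0 < (F.A.filter fun a => a.2 = v).card :=
    Finset.card_pos.mpr ⟨(c, v), Finset.mem_filter.mpr ⟨hc, rfl⟩⟩
  have : 1 < F.headCount v := by unfold MixedGraph.headCount; omega
  omega

/-- Key lemma: any nontrivial path in `UUG F` ending at a vertex of head count `0`
starts with an arc into its first vertex, coming from within the path. -/
lemma path_to_zero {V : Type*} [DecidableEq V] {F : MixedGraph V}
    (hF : F.IsMatchingForest) :
    ∀ {b i : V} (q : F.UUG.Walk b i), q.IsPath → F.headCount i = 0 → ¬q.Nil →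
      ∃ c ∈ q.support, c ≠ b ∧ (c, b) ∈ F.A := by
  intro b i q
  induction q with
  | nil => intro _ _ hn; exact absurd SimpleGraph.Walk.Nil.nil hn
  | @cons b v i h q' ih =>
    intro hp hi _
    obtain ⟨hq'path, hbns⟩ := (SimpleGraph.Walk.cons_isPath_iff _ _).mp hp
    have hadj := UUG_adj.mp h
    by_cases hq'nil : q'.Nil
    · -- then v = i
      have hvi : v = i := hq'nil.eq
      subst hvi
      rcases hadj.2 with hE | hA | hA
      · exact absurd (Sym2.mem_mk_right b v) (headCount_zero_E hi _ hE)
      · exact absurd rfl (headCount_zero_A hi _ hA)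
      · exact ⟨v, by simp, (hadj.1).symm, hA⟩
    · obtain ⟨c, hcs, hcv, hcA⟩ := ih hq'path hi hq'nil
      rcases hadj.2 with hE | hA | hA
      · exact (edge_arc_absurd (hF.1 v) hE (Sym2.mem_mk_right b v) hcA).elim
      · exact (two_arcs_absurd (hF.1 v) hcA hA fun hcb => hbns (hcb ▸ hcs)).elim
      · exact ⟨v, by simp, (hadj.1).symm, hA⟩

lemma not_reachable {V : Type*} [DecidableEq V] {F : MixedGraph V}
    (hF : F.IsMatchingForest) {i j : V} (hij : i ≠ j)
    (hi : F.headCount i = 0) (hj : F.headCount j = 0) : ¬ F.UUG.Reachable i j := by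
  intro hreach
  obtain ⟨w⟩ := hreach.symm
  have hp := w.toPath
  obtain ⟨c, _, _, hcA⟩ := path_to_zero hF (w.toPath : F.UUG.Path j i).1
    (w.toPath : F.UUG.Path j i).2 hi (SimpleGraph.Walk.not_nil_of_ne (Ne.symm hij))
  exact absurd rfl (headCount_zero_A hj _ hcA)

lemma addUndirEdge_UUG_adj {V : Type*} [DecidableEq V] {F : MixedGraph V} {i j a b : V}
    (hij : i ≠ j) (h : (F.addUndirEdge hij).UUG.Adj a b) (hne : s(a, b) ≠ s(i, j)) :
    F.UUG.Adj a b := by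
  rw [UUG_adj] at h ⊢
  refine ⟨h.1, ?_⟩
  rcases h.2 with hE | hA | hA
  · rcases Finset.mem_insert.mp hE with heq | hE
    · exact absurd heq hne
    · exact Or.inl hE
  · exact Or.inr (Or.inl hA)
  · exact Or.inr (Or.inr hA)

/-- Adding an undirected edge between two distinct vertices of head count `0` of a
matching forest yields a matching forest in which both endpoints have head count `1`. -/
theorem addUndirEdge_isMatchingForest
    {V : Type*} [Fintype V] [DecidableEq V]
    (F : MixedGraph V) (hF : F.IsMatchingForest) (i j : V) (hij : i ≠ j)
    (hi : F.headCount i = 0) (hj : F.headCount j = 0) :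
    (F.addUndirEdge hij).IsMatchingForest ∧
      (F.addUndirEdge hij).headCount i = 1 ∧ (F.addUndirEdge hij).headCount j = 1 := by
  set F' := F.addUndirEdge hij with hF'
  have hEcount : ∀ v, v = i ∨ v = j →
      (F'.E.filter fun e => v ∈ e) = {s(i, j)} := by
    intro v hv
    have hvmem : v ∈ s(i, j) := by rcases hv with rfl | rfl <;> simp
    have hfe : (F.E.filter fun e => v ∈ e) = ∅ := by
      rw [Finset.filter_eq_empty_iff]
      intro e he
      rcases hv with rfl | rfl
      · exact headCount_zero_E hi e he
      · exact headCount_zero_E hj e he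
    show ((insert s(i, j) F.E).filter fun e => v ∈ e) = {s(i, j)}
    rw [Finset.filter_insert, if_pos hvmem, hfe]
    rfl
  have hAi : (F.A.filter fun a => a.2 = i) = ∅ := by
    rw [Finset.filter_eq_empty_iff]; exact headCount_zero_A hi
  have hAj : (F.A.filter fun a => a.2 = j) = ∅ := by
    rw [Finset.filter_eq_empty_iff]; exact headCount_zero_A hj
  have hcount : ∀ v, v = i ∨ v = j → F'.headCount v = 1 := by
    intro v hv
    show (F'.E.filter fun e => v ∈ e).card + (F.A.filter fun a => a.2 = v).card = 1
    rw [hEcount v hv]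
    rcases hv with rfl | rfl
    · rw [hAi]; rfl
    · rw [hAj]; rfl
  have hcountle : ∀ v, F'.headCount v ≤ 1 := by
    intro v
    by_cases hv : v = i ∨ v = j
    · exact (hcount v hv).le
    · push_neg at hv
      have : F'.headCount v = F.headCount v := by
        show ((insert s(i, j) F.E).filter fun e => v ∈ e).card + _ = _
        rw [Finset.filter_insert, if_neg (by simp [Sym2.mem_iff, hv.1, hv.2])]
        rfl
      rw [this]; exact hF.1 v
  have hnoarc : ∀ a b : V, s(a, b) ∈ F'.E → (a, b) ∉ F.A ∧ (b, a) ∉ F.A := by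
    intro a b hab
    rcases Finset.mem_insert.mp hab with heq | hE
    · rw [Sym2.eq_iff] at heq
      constructor <;> intro hA
      · rcases heq with ⟨rfl, rfl⟩ | ⟨rfl, rfl⟩
        · exact headCount_zero_A hj _ hA rfl
        · exact headCount_zero_A hi _ hA rfl
      · rcases heq with ⟨rfl, rfl⟩ | ⟨rfl, rfl⟩
        · exact headCount_zero_A hi _ hA rfl
        · exact headCount_zero_A hj _ hA rfl
    · exact hF.2.2.1 a b hE
  have hacyclic : F'.UUG.IsAcyclic := by
    intro v c hc
    by_cases he : s(i, j) ∈ c.edges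
    · have hreach := (SimpleGraph.adj_and_reachable_delete_edges_iff_exists_cycle.mpr
        ⟨v, c, hc, he⟩).2
      have hmono : F'.UUG \ SimpleGraph.fromEdgeSet {s(i, j)} ≤ F.UUG := by
        intro a b hab
        obtain ⟨hab1, hab2⟩ := hab
        refine addUndirEdge_UUG_adj hij hab1 ?_
        intro heq
        exact hab2 (by simp [SimpleGraph.fromEdgeSet_adj, heq, hab1.ne])
      exact not_reachable hF hij hi hj (hreach.mono hmono)
    · have hsub : ∀ e ∈ c.edges, e ∈ F.UUG.edgeSet := by
        intro e hee
        have h1 : e ∈ F'.UUG.edgeSet := c.edges_subset_edgeSet hee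
        induction e with
        | h a b =>
          exact (addUndirEdge_UUG_adj hij h1 (fun heq => he (heq ▸ hee))).symm.symm
      exact hF.2.2.2 _ (hc.transfer hsub)
  exact ⟨⟨hcountle, hF.2.1, hnoarc, hacyclic⟩, hcount i (Or.inl rfl), hcount j (Or.inr rfl)⟩
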